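/- If M ≤ 1, then the only nonnegative stationary state of the equation ∂_t c = ∂_x(∂_x c + (x + c(-1) - c(1)) c) on (-1,1) with zero-flux boundary conditions and mass M is the Gaussian profile G_M(x) = M·exp(-x²/2)/∫_{-1}^1 exp(-y²/2) dy. Equivalently: any C¹ function c ≥ 0 on [-1,1] with ∫_{-1}^1 c = M ≤ 1 satisfying c'(x) + (x + α)c(x) = 0 for all x, where α = c(-1) - c(1), must have α = 0 and hence c = G_M. -/

import Mathlib

open Set Real

/-- A function continuous on `Icc (-1) 1` with zero derivative on the open interval
is constant on the closed interval. -/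
lemma const_of_deriv_zero_Icc {g : ℝ → ℝ}
    (hgc : ContinuousOn g (Icc (-1 : ℝ) 1))
    (hder : ∀ x ∈ Ioo (-1 : ℝ) 1, HasDerivAt g 0 x) :
    ∀ x ∈ Icc (-1 : ℝ) 1, g x = g (-1) := by
  have hsub : ∀ a ∈ Ioo (-1:ℝ) 1, ∀ b ∈ Ioo (-1:ℝ) 1, a ≤ b → g b = g a := by
    intro a ha b hb hab
    have := constant_of_has_deriv_right_zero
      (f := g) (a := a) (b := b)
      (hgc.mono (Icc_subset_Icc ha.1.le hb.2.le))
      (fun x hx => by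
        have hx' : x ∈ Ioo (-1:ℝ) 1 := ⟨lt_of_lt_of_le ha.1 hx.1, lt_of_lt_of_le hx.2 hb.2.le⟩
        exact (hder x hx').hasDerivWithinAt)
    exact this b ⟨hab, le_rfl⟩
  have h0 : (0 : ℝ) ∈ Ioo (-1:ℝ) 1 := by norm_num
  have hIoo : ∀ x ∈ Ioo (-1:ℝ) 1, g x = g 0 := by
    intro x hx
    rcases le_total x 0 with h | h
    · exact (hsub x hx 0 h0 h).symm
    · exact hsub 0 h0 x hx h
  have hend : ∀ e ∈ Icc (-1:ℝ) 1, e ∈ closure (Ioo (-1:ℝ) 1) → g e = g 0 := by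
    intro e he hecl
    have hne : (nhdsWithin e (Ioo (-1:ℝ) 1)).NeBot := mem_closure_iff_nhdsWithin_neBot.1 hecl
    have h1 : Filter.Tendsto g (nhdsWithin e (Ioo (-1:ℝ) 1)) (nhds (g e)) :=
      (hgc e he).mono Ioo_subset_Icc_self
    have h2 : Filter.Tendsto g (nhdsWithin e (Ioo (-1:ℝ) 1)) (nhds (g 0)) := by
      refine Filter.Tendsto.congr' ?_ tendsto_const_nhds
      filter_upwards [self_mem_nhdsWithin] with x hx using (hIoo x hx).symm
    exact tendsto_nhds_unique h1 h2
  have hclos : closure (Ioo (-1:ℝ) 1) = Icc (-1:ℝ) 1 := closure_Ioo (by norm_num)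
  have hmem : ∀ e ∈ Icc (-1:ℝ) 1, g e = g 0 := by
    intro e he
    rcases eq_or_ne e (-1) with rfl | h1
    · exact hend _ he (hclos ▸ he)
    rcases eq_or_ne e 1 with rfl | h2
    · exact hend _ he (hclos ▸ he)
    · exact hIoo e ⟨lt_of_le_of_ne he.1 (Ne.symm h1), lt_of_le_of_ne he.2 h2⟩
  intro x hx
  rw [hmem x hx, hmem (-1) (by norm_num)]

/-- If M ≤ 1, any nonnegative C¹ stationary state of mass M is the Gaussian profile:
α = c(-1) - c(1) must vanish and c = G_M. -/
theorem stmt_2 (c : ℝ → ℝ) (M : ℝ)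
    (hc1 : ContDiffOn ℝ 1 c (Set.Icc (-1) 1))
    (hpos : ∀ x ∈ Set.Icc (-1 : ℝ) 1, 0 ≤ c x)
    (hM : (∫ x in (-1 : ℝ)..1, c x) = M)
    (hM1 : M ≤ 1)
    (hstat : ∀ x ∈ Set.Icc (-1 : ℝ) 1,
      deriv c x + (x + (c (-1) - c 1)) * c x = 0) :
    c (-1) - c 1 = 0 ∧
      ∀ x ∈ Set.Icc (-1 : ℝ) 1,
        c x = M * Real.exp (-x ^ 2 / 2) / ∫ y in (-1 : ℝ)..1, Real.exp (-y ^ 2 / 2) := by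
  obtain ⟨α, hαdef⟩ : ∃ α : ℝ, α = c (-1) - c 1 := ⟨_, rfl⟩
  rw [← hαdef] at hstat ⊢
  have hccont : ContinuousOn c (Icc (-1:ℝ) 1) := hc1.continuousOn
  have hgc : ContinuousOn (fun x => c x * Real.exp (α*(x+1) + (x^2-1)/2)) (Icc (-1:ℝ) 1) :=
    hccont.mul (Continuous.continuousOn (by fun_prop))
  have hder : ∀ x ∈ Ioo (-1:ℝ) 1,
      HasDerivAt (fun x => c x * Real.exp (α*(x+1) + (x^2-1)/2)) 0 x := by
    intro x hx
    have hdc : DifferentiableAt ℝ c x :=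
      (hc1.differentiableOn one_ne_zero).differentiableAt (Icc_mem_nhds hx.1 hx.2)
    have hc' : HasDerivAt c (deriv c x) x := hdc.hasDerivAt
    have hF : HasDerivAt (fun x : ℝ => α*(x+1) + (x^2-1)/2) (α + x) x := by
      have h1 : HasDerivAt (fun x : ℝ => α*(x+1)) (α * 1) x :=
        ((hasDerivAt_id x).add_const 1).const_mul α
      have h2 : HasDerivAt (fun x : ℝ => (x^2-1)/2) ((2 * x ^ 1) / 2) x :=
        ((hasDerivAt_pow 2 x).sub_const 1).div_const 2
      have := h1.add h2
      exact this.congr_deriv (by ring)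
    have := hc'.mul hF.exp
    refine this.congr_deriv (Eq.symm ?_)
    have hs : deriv c x + (x + α) * c x = 0 := hstat x (Ioo_subset_Icc_self hx)
    linear_combination (-(Real.exp (α*(x+1) + (x^2-1)/2))) * hs
  have hgconst := const_of_deriv_zero_Icc hgc hder
  have hrep : ∀ x ∈ Icc (-1:ℝ) 1, c x = c (-1) * Real.exp (-(α*(x+1)+(x^2-1)/2)) := by
    intro x hx
    have h := hgconst x hx
    have hF1 : α*((-1:ℝ)+1) + (((-1:ℝ))^2-1)/2 = 0 := by ring
    rw [hF1, Real.exp_zero, mul_one] at h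
    have h2 : c (-1) * Real.exp (-(α*(x+1)+(x^2-1)/2))
        = c x * Real.exp (α*(x+1)+(x^2-1)/2) * Real.exp (-(α*(x+1)+(x^2-1)/2)) := by rw [h]
    rw [mul_assoc, ← Real.exp_add, add_neg_cancel, Real.exp_zero, mul_one] at h2
    exact h2.symm
  have hc1eq : c 1 = c (-1) * Real.exp (-(2*α)) := by
    have h := hrep 1 (by norm_num)
    have h1 : -(α*((1:ℝ)+1)+((1:ℝ)^2-1)/2) = -(2*α) := by ring
    rw [h1] at h
    exact h
  have halpha : α = c (-1) * (1 - Real.exp (-(2*α))) := by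
    have h : α = c (-1) - c 1 := hαdef
    rw [hc1eq] at h
    linear_combination h
  have hMJ : M = c (-1) * ∫ x in (-1:ℝ)..1, Real.exp (-(α*(x+1)+(x^2-1)/2)) := by
    rw [← hM, ← intervalIntegral.integral_const_mul]
    apply intervalIntegral.integral_congr
    intro x hx
    rw [Set.uIcc_of_le (by norm_num : (-1:ℝ) ≤ 1)] at hx
    exact hrep x hx
  have hα0 : α = 0 := by
    by_contra hα
    have hc0 : c (-1) ≠ 0 := by
      intro h
      rw [h, zero_mul] at halpha
      exact hα halpha
    have hcpos : 0 < c (-1) := lt_of_le_of_ne (hpos (-1) (by norm_num)) (Ne.symm hc0)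
    have hK : (∫ x in (-1:ℝ)..1, Real.exp (-(α*(x+1)))) = (1 - Real.exp (-(2*α)))/α := by
      have hH : ∀ x ∈ Set.uIcc (-1:ℝ) 1, HasDerivAt (fun x => -Real.exp (-(α*(x+1)))/α)
          (Real.exp (-(α*(x+1)))) x := by
        intro x _
        have h1 : HasDerivAt (fun x : ℝ => -(α*(x+1))) (-α) x := by
          have := (((hasDerivAt_id x).add_const 1).const_mul α).neg
          exact this.congr_deriv (by ring)
        have := (h1.exp.neg).div_const α
        refine this.congr_deriv (Eq.symm ?_)
        rw [eq_div_iff hα]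
        ring
      have := intervalIntegral.integral_eq_sub_of_hasDerivAt hH
        (by apply Continuous.intervalIntegrable; fun_prop)
      rw [this]
      field_simp
      ring_nf
      simp only [Real.exp_zero]
      ring
    have hJK : (∫ x in (-1:ℝ)..1, Real.exp (-(α*(x+1)))) <
        ∫ x in (-1:ℝ)..1, Real.exp (-(α*(x+1) + (x^2-1)/2)) := by
      apply intervalIntegral.integral_lt_integral_of_continuousOn_of_le_of_exists_lt (by norm_num)
      · exact Continuous.continuousOn (by fun_prop)
      · exact Continuous.continuousOn (by fun_prop)
      · intro x hx
        apply Real.exp_le_exp.2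
        nlinarith [hx.1, hx.2]
      · exact ⟨0, by norm_num, by apply Real.exp_lt_exp.2; norm_num⟩
    have hcK : c (-1) * ((1 - Real.exp (-(2*α)))/α) = 1 := by
      field_simp
      linear_combination -halpha
    have e1 : c (-1) * (∫ x in (-1:ℝ)..1, Real.exp (-(α*(x+1)))) = 1 := by
      rw [hK]; exact hcK
    have h2 : c (-1) * (∫ x in (-1:ℝ)..1, Real.exp (-(α*(x+1)))) <
        c (-1) * ∫ x in (-1:ℝ)..1, Real.exp (-(α*(x+1) + (x^2-1)/2)) :=
      mul_lt_mul_of_pos_left hJK hcpos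
    linarith [hMJ.symm.le]
  refine ⟨hα0, ?_⟩
  intro x hx
  have hI : (0:ℝ) < ∫ y in (-1:ℝ)..1, Real.exp (-y^2/2) := by
    apply intervalIntegral.intervalIntegral_pos_of_pos
    · apply Continuous.intervalIntegrable; fun_prop
    · intro x; positivity
    · norm_num
  have hexp : ∀ x : ℝ, Real.exp (-((0:ℝ)*(x+1)+(x^2-1)/2)) = Real.exp (1/2) * Real.exp (-x^2/2) := by
    intro x; rw [← Real.exp_add]; congr 1; ring
  have hMI : M = c (-1) * (Real.exp (1/2) * ∫ y in (-1:ℝ)..1, Real.exp (-y^2/2)) := by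
    rw [hMJ, hα0]
    congr 1
    rw [← intervalIntegral.integral_const_mul]
    apply intervalIntegral.integral_congr
    intro y _
    exact hexp y
  rw [hrep x hx, hα0, hMI, hexp x]
  rw [eq_div_iff hI.ne']
  ring
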